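/- For n ≥ 1, the signed count over all overpartitions π of n, weighted by (-1)^{ℓ_{O≥N}(π)} where ℓ_{O≥N}(π) is the number of overlined parts of size ≥ the smallest non-overlined part (counting all overlined parts if there is no non-overlined part), equals 2·D_e(n), twice the number of distinct-part partitions of n with an even number of parts. -/

import Mathlib

open scoped Classical

/-- An overpartition of `n`: a finite set of overlined part sizes (the first
occurrence of a size may be overlined, so overlined parts are distinct)
together with a multiset of non-overlined parts, all parts positive,
with total sum `n`. -/
structure Overpartition (n : ℕ) where
  overl : Finset ℕ
  plain : Multiset ℕ
  over_pos : ∀ x ∈ overl, 0 < x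
  plain_pos : ∀ x ∈ plain, 0 < x
  sum_eq : (∑ x ∈ overl, x) + plain.sum = n
/-- Number of overlined parts of size at least the smallest non-overlined part;
all (overlined) parts count if there is no non-overlined part. -/
noncomputable def lOgeN {n : ℕ} (π : Overpartition n) : ℕ :=
  if π.plain = 0 then π.overl.card
  else (π.overl.filter (fun x => ∃ y ∈ π.plain, y ≤ x)).card

namespace Stmt8

variable {n : ℕ}

theorem Overpartition.ext' {π ρ : Overpartition n} (h1 : π.overl = ρ.overl)
    (h2 : π.plain = ρ.plain) : π = ρ := by
  cases π; cases ρ; simp_all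

lemma over_sum_le (π : Overpartition n) : (∑ x ∈ π.overl, x) ≤ n := by
  have := π.sum_eq; omega

lemma over_subset (π : Overpartition n) : π.overl ⊆ Finset.range (n + 1) := by
  intro x hx
  have h1 : x ≤ ∑ y ∈ π.overl, y :=
    Finset.single_le_sum (f := fun y => y) (fun y _ => Nat.zero_le y) hx
  have := over_sum_le π
  simp only [Finset.mem_range]; omega

/-- Pad the plain parts with 1's to get a partition of `n`. -/
noncomputable def pad (π : Overpartition n) : n.Partition where
  parts := π.plain + Multiset.replicate (∑ x ∈ π.overl, x) 1
  parts_pos := by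
    intro i hi
    rcases Multiset.mem_add.mp hi with h | h
    · exact π.plain_pos i h
    · rw [Multiset.eq_of_mem_replicate h]; norm_num
  parts_sum := by
    rw [Multiset.sum_add, Multiset.sum_replicate]
    have := π.sum_eq
    simp only [smul_eq_mul, mul_one]
    omega

instance : Finite (Overpartition n) := by
  apply Finite.of_injective (f := fun π : Overpartition n =>
    ((⟨π.overl, over_subset π⟩ : {t : Finset ℕ // t ⊆ Finset.range (n + 1)}), pad π))
  intro π ρ h
  simp only [Prod.mk.injEq, Subtype.mk.injEq] at h
  obtain ⟨h1, h2⟩ := h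
  refine Overpartition.ext' h1 ?_
  have h3 : (pad π).parts = (pad ρ).parts := by rw [h2]
  simp only [pad, h1] at h3
  exact add_right_cancel h3

noncomputable instance : Fintype (Overpartition n) := Fintype.ofFinite _

/-- The minimum plain part (junk value 0 if no plain part). -/
noncomputable def Nmin (π : Overpartition n) : ℕ :=
  if h : π.plain = 0 then 0
  else π.plain.toFinset.min' (Multiset.toFinset_nonempty.mpr h)

lemma Nmin_mem {π : Overpartition n} (h : π.plain ≠ 0) : Nmin π ∈ π.plain := by
  rw [Nmin, dif_neg h]
  exact Multiset.mem_toFinset.mp (Finset.min'_mem _ _)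

lemma Nmin_le {π : Overpartition n} (h : π.plain ≠ 0) {y : ℕ} (hy : y ∈ π.plain) :
    Nmin π ≤ y := by
  rw [Nmin, dif_neg h]
  exact Finset.min'_le _ _ (Multiset.mem_toFinset.mpr hy)

lemma Nmin_eq_of {π : Overpartition n} (h : π.plain ≠ 0) {x : ℕ} (hx : x ∈ π.plain)
    (hall : ∀ y ∈ π.plain, x ≤ y) : Nmin π = x :=
  le_antisymm (Nmin_le h hx) (hall _ (Nmin_mem h))

lemma Nmin_pos {π : Overpartition n} (h : π.plain ≠ 0) : 0 < Nmin π :=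
  π.plain_pos _ (Nmin_mem h)

/-- Overlined parts of size at least the smallest plain part. -/
noncomputable def Tset (π : Overpartition n) : Finset ℕ :=
  π.overl.filter (fun x => Nmin π ≤ x)

lemma lOgeN_eq {π : Overpartition n} (h : π.plain ≠ 0) : lOgeN π = (Tset π).card := by
  rw [lOgeN, if_neg h, Tset]
  congr 1
  apply Finset.filter_congr
  intro x _
  constructor
  · rintro ⟨y, hy, hyx⟩
    exact le_trans (Nmin_le h hy) hyx
  · intro hx'
    exact ⟨Nmin π, Nmin_mem h, hx'⟩

/-- Parts at least `Nmin` other than one copy of `Nmin`: the support of the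
toggling involution. -/
noncomputable def mset (π : Overpartition n) : Finset ℕ :=
  Tset π ∪ (π.plain.erase (Nmin π)).toFinset

lemma mset_ge {π : Overpartition n} (h : π.plain ≠ 0) {x : ℕ} (hx : x ∈ mset π) :
    Nmin π ≤ x := by
  rcases Finset.mem_union.mp hx with hx | hx
  · exact (Finset.mem_filter.mp hx).2
  · exact Nmin_le h (Multiset.mem_of_mem_erase (Multiset.mem_toFinset.mp hx))

/-- The smallest togglable part. -/
noncomputable def mval (π : Overpartition n) : ℕ :=
  if h : (mset π).Nonempty then (mset π).min' h else 0

lemma mval_mem {π : Overpartition n} (h : (mset π).Nonempty) : mval π ∈ mset π := by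
  rw [mval, dif_pos h]; exact Finset.min'_mem _ _

lemma mval_le {π : Overpartition n} {x : ℕ} (hx : x ∈ mset π) : mval π ≤ x := by
  rw [mval, dif_pos ⟨x, hx⟩]; exact Finset.min'_le _ _ hx

lemma mval_eq_of {π : Overpartition n} {x : ℕ} (hx : x ∈ mset π)
    (hall : ∀ y ∈ mset π, x ≤ y) : mval π = x :=
  le_antisymm (mval_le hx) (hall _ (mval_mem ⟨x, hx⟩))

lemma mval_ge_Nmin {π : Overpartition n} (h1 : π.plain ≠ 0) (h2 : (mset π).Nonempty) :
    Nmin π ≤ mval π := mset_ge h1 (mval_mem h2)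

lemma mval_in_erase {π : Overpartition n} (h2 : (mset π).Nonempty)
    (hm : mval π ∉ π.overl) : mval π ∈ π.plain.erase (Nmin π) := by
  rcases Finset.mem_union.mp (mval_mem h2) with hx | hx
  · exact absurd (Finset.mem_filter.mp hx).1 hm
  · exact Multiset.mem_toFinset.mp hx

/-- The sign-reversing toggling involution. -/
noncomputable def iota (π : Overpartition n) : Overpartition n :=
  if h : π.plain ≠ 0 ∧ (mset π).Nonempty then
    if hm : mval π ∈ π.overl then
      { overl := π.overl.erase (mval π)
        plain := mval π ::ₘ π.plain
        over_pos := fun x hx => π.over_pos x (Finset.mem_of_mem_erase hx)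
        plain_pos := by
          intro x hx
          rcases Multiset.mem_cons.mp hx with rfl | hx
          · exact lt_of_lt_of_le (Nmin_pos h.1) (mval_ge_Nmin h.1 h.2)
          · exact π.plain_pos x hx
        sum_eq := by
          have h1 : mval π + ∑ x ∈ π.overl.erase (mval π), x = ∑ x ∈ π.overl, x :=
            Finset.add_sum_erase π.overl (fun x => x) hm
          have h2 := π.sum_eq
          simp only [Multiset.sum_cons]
          omega }
    else
      { overl := insert (mval π) π.overl
        plain := π.plain.erase (mval π)
        over_pos := by
          intro x hx
          rcases Finset.mem_insert.mp hx with rfl | hx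
          · exact lt_of_lt_of_le (Nmin_pos h.1) (mval_ge_Nmin h.1 h.2)
          · exact π.over_pos x hx
        plain_pos := fun x hx => π.plain_pos x (Multiset.mem_of_mem_erase hx)
        sum_eq := by
          have hmem : mval π ∈ π.plain :=
            Multiset.mem_of_mem_erase (mval_in_erase h.2 hm)
          have h1 : mval π ::ₘ π.plain.erase (mval π) = π.plain :=
            Multiset.cons_erase hmem
          have h3 : mval π + (π.plain.erase (mval π)).sum = π.plain.sum := by
            rw [← Multiset.sum_cons, h1]
          have h2 := π.sum_eq
          rw [Finset.sum_insert hm]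
          omega }
  else π

section Key

variable {π : Overpartition n}

lemma iota_over₁ (h1 : π.plain ≠ 0) (h2 : (mset π).Nonempty) (hm : mval π ∈ π.overl) : (iota π).overl = π.overl.erase (mval π) := by
  rw [iota, dif_pos ⟨h1, h2⟩, dif_pos hm]

lemma iota_plain₁ (h1 : π.plain ≠ 0) (h2 : (mset π).Nonempty) (hm : mval π ∈ π.overl) : (iota π).plain = mval π ::ₘ π.plain := by
  rw [iota, dif_pos ⟨h1, h2⟩, dif_pos hm]

lemma iota_over₂ (h1 : π.plain ≠ 0) (h2 : (mset π).Nonempty) (hm : mval π ∉ π.overl) : (iota π).overl = insert (mval π) π.overl := by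
  rw [iota, dif_pos ⟨h1, h2⟩, dif_neg hm]

lemma iota_plain₂ (h1 : π.plain ≠ 0) (h2 : (mset π).Nonempty) (hm : mval π ∉ π.overl) : (iota π).plain = π.plain.erase (mval π) := by
  rw [iota, dif_pos ⟨h1, h2⟩, dif_neg hm]

lemma key₁ (h1 : π.plain ≠ 0) (h2 : (mset π).Nonempty) (hm : mval π ∈ π.overl) :
    (iota π).plain ≠ 0 ∧ (mset (iota π)).Nonempty ∧ iota (iota π) = π ∧
      lOgeN (iota π) + 1 = lOgeN π := by
  set m := mval π with hmdef
  set N := Nmin π with hNdef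
  have hNm : N ≤ m := mval_ge_Nmin h1 h2
  have hov : (iota π).overl = π.overl.erase m := iota_over₁ h1 h2 hm
  have hpl : (iota π).plain = m ::ₘ π.plain := iota_plain₁ h1 h2 hm
  have h1' : (iota π).plain ≠ 0 := by rw [hpl]; exact Multiset.cons_ne_zero
  have hN' : Nmin (iota π) = N := by
    apply Nmin_eq_of h1'
    · rw [hpl]; exact Multiset.mem_cons_of_mem (Nmin_mem h1)
    · intro y hy
      rw [hpl] at hy
      rcases Multiset.mem_cons.mp hy with rfl | hy
      · exact hNm
      · exact Nmin_le h1 hy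
  -- `m` belongs to the erased plain parts of `iota π`
  have hmep : m ∈ (iota π).plain.erase N := by
    rw [hpl]
    rcases eq_or_ne m N with he | he
    · rw [← he, Multiset.erase_cons_head]
      have : N ∈ π.plain := Nmin_mem h1
      rwa [← he] at this
    · rw [Multiset.erase_cons_tail _ he]
      exact Multiset.mem_cons_self _ _
  have hmmem : m ∈ mset (iota π) := by
    rw [mset, hN']
    exact Finset.mem_union_right _ (Multiset.mem_toFinset.mpr hmep)
  have h2' : (mset (iota π)).Nonempty := ⟨m, hmmem⟩
  have hTs : Tset (iota π) = (Tset π).erase m := by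
    rw [Tset, Tset, hN', hov, Finset.filter_erase]
  have hall : ∀ y ∈ mset (iota π), m ≤ y := by
    intro y hy
    rcases Finset.mem_union.mp hy with hy | hy
    · rw [hTs] at hy
      exact mval_le (Finset.mem_union_left _ (Finset.mem_of_mem_erase hy))
    · rw [hN'] at hy
      have hy' := Multiset.mem_toFinset.mp hy
      rw [hpl] at hy'
      rcases eq_or_ne m N with he | he
      · rw [← he, Multiset.erase_cons_head] at hy'
        exact he ▸ Nmin_le h1 hy'
      · rw [Multiset.erase_cons_tail _ he] at hy'
        rcases Multiset.mem_cons.mp hy' with rfl | hy'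
        · exact le_rfl
        · exact mval_le (Finset.mem_union_right _ (Multiset.mem_toFinset.mpr hy'))
  have hmv' : mval (iota π) = m := mval_eq_of hmmem hall
  have hnm' : mval (iota π) ∉ (iota π).overl := by
    rw [hmv', hov]; exact Finset.notMem_erase _ _
  refine ⟨h1', h2', ?_, ?_⟩
  · apply Overpartition.ext'
    · rw [iota_over₂ h1' h2' hnm', hmv', hov, Finset.insert_erase hm]
    · rw [iota_plain₂ h1' h2' hnm', hmv', hpl, Multiset.erase_cons_head]
  · have hmT : m ∈ Tset π := Finset.mem_filter.mpr ⟨hm, hNm⟩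
    rw [lOgeN_eq h1', lOgeN_eq h1, hTs, Finset.card_erase_of_mem hmT]
    have : 0 < (Tset π).card := Finset.card_pos.mpr ⟨m, hmT⟩
    omega

lemma key₂ (h1 : π.plain ≠ 0) (h2 : (mset π).Nonempty) (hm : mval π ∉ π.overl) :
    (iota π).plain ≠ 0 ∧ (mset (iota π)).Nonempty ∧ iota (iota π) = π ∧
      lOgeN (iota π) = lOgeN π + 1 := by
  set m := mval π with hmdef
  set N := Nmin π with hNdef
  have hNm : N ≤ m := mval_ge_Nmin h1 h2
  have hmer : m ∈ π.plain.erase N := mval_in_erase h2 hm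
  have hmpl : m ∈ π.plain := Multiset.mem_of_mem_erase hmer
  have hov : (iota π).overl = insert m π.overl := iota_over₂ h1 h2 hm
  have hpl : (iota π).plain = π.plain.erase m := iota_plain₂ h1 h2 hm
  have hNin : N ∈ (iota π).plain := by
    rw [hpl]
    rcases eq_or_ne m N with he | he
    · rw [he] at hmer ⊢; exact hmer
    · exact (Multiset.mem_erase_of_ne (Ne.symm he)).mpr (Nmin_mem h1)
  have h1' : (iota π).plain ≠ 0 := by
    intro h0; rw [h0] at hNin; exact absurd hNin (Multiset.notMem_zero _)
  have hN' : Nmin (iota π) = N := by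
    apply Nmin_eq_of h1' hNin
    intro y hy
    rw [hpl] at hy
    exact Nmin_le h1 (Multiset.mem_of_mem_erase hy)
  have hTs : Tset (iota π) = insert m (Tset π) := by
    rw [Tset, Tset, hN', hov, Finset.filter_insert, if_pos hNm]
  have hmmem : m ∈ mset (iota π) := by
    rw [mset, hTs]
    exact Finset.mem_union_left _ (Finset.mem_insert_self _ _)
  have h2' : (mset (iota π)).Nonempty := ⟨m, hmmem⟩
  have hall : ∀ y ∈ mset (iota π), m ≤ y := by
    intro y hy
    rcases Finset.mem_union.mp hy with hy | hy
    · rw [hTs] at hy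
      rcases Finset.mem_insert.mp hy with rfl | hy
      · exact le_rfl
      · exact mval_le (Finset.mem_union_left _ hy)
    · rw [hN'] at hy
      have hy' := Multiset.mem_toFinset.mp hy
      rw [hpl, Multiset.erase_comm] at hy'
      exact mval_le (Finset.mem_union_right _
        (Multiset.mem_toFinset.mpr (Multiset.mem_of_mem_erase hy')))
  have hmv' : mval (iota π) = m := mval_eq_of hmmem hall
  have hm' : mval (iota π) ∈ (iota π).overl := by
    rw [hmv', hov]; exact Finset.mem_insert_self _ _
  refine ⟨h1', h2', ?_, ?_⟩
  · apply Overpartition.ext'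
    · rw [iota_over₁ h1' h2' hm', hmv', hov, Finset.erase_insert hm]
    · rw [iota_plain₁ h1' h2' hm', hmv', hpl, Multiset.cons_erase hmpl]
  · have hmT : m ∉ Tset π := fun hc => hm (Finset.mem_filter.mp hc).1
    rw [lOgeN_eq h1', lOgeN_eq h1, hTs, Finset.card_insert_of_notMem hmT]

lemma iota_key (h1 : π.plain ≠ 0) (h2 : (mset π).Nonempty) :
    (iota π).plain ≠ 0 ∧ (mset (iota π)).Nonempty ∧ iota (iota π) = π ∧
      (lOgeN (iota π) + 1 = lOgeN π ∨ lOgeN (iota π) = lOgeN π + 1) := by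
  by_cases hm : mval π ∈ π.overl
  · obtain ⟨a, b, c, d⟩ := key₁ h1 h2 hm
    exact ⟨a, b, c, Or.inl d⟩
  · obtain ⟨a, b, c, d⟩ := key₂ h1 h2 hm
    exact ⟨a, b, c, Or.inr d⟩

lemma iota_ne (h1 : π.plain ≠ 0) (h2 : (mset π).Nonempty) : iota π ≠ π := by
  intro he
  have hc : Multiset.card (iota π).plain = Multiset.card π.plain := by rw [he]
  by_cases hm : mval π ∈ π.overl
  · rw [iota_plain₁ h1 h2 hm] at hc
    simp only [Multiset.card_cons] at hc
    omega
  · have hmpl : mval π ∈ π.plain := Multiset.mem_of_mem_erase (mval_in_erase h2 hm)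
    rw [iota_plain₂ h1 h2 hm] at hc
    simp only [Multiset.card_erase_of_mem hmpl, Nat.pred_eq_sub_one] at hc
    have : 0 < Multiset.card π.plain := Multiset.card_pos_iff_exists_mem.mpr ⟨_, hmpl⟩
    omega

end Key

/-- Distinct partitions of `n` as finsets. -/
def DP (n : ℕ) : Type := {s : Finset ℕ // (∀ x ∈ s, 0 < x) ∧ ∑ x ∈ s, x = n}

lemma DP_subset (s : DP n) : s.1 ⊆ Finset.range (n + 1) := by
  intro x hx
  have h1 : x ≤ ∑ y ∈ s.1, y :=
    Finset.single_le_sum (f := fun y => y) (fun y _ => Nat.zero_le y) hx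
  rw [s.2.2] at h1
  simp only [Finset.mem_range]; omega

instance : Finite (DP n) := by
  apply Finite.of_injective (f := fun s : DP n =>
    (⟨s.1, DP_subset s⟩ : {t : Finset ℕ // t ⊆ Finset.range (n + 1)}))
  intro a b h
  simp only [Subtype.mk.injEq] at h
  exact Subtype.ext h

noncomputable instance : Fintype (DP n) := Fintype.ofFinite _

lemma signed_count {α : Type*} [Fintype α] (f : α → ℕ) :
    ((Nat.card {a : α // Even (f a)} : ℤ) - Nat.card {a : α // Odd (f a)}) =
      ∑ a, (-1 : ℤ) ^ (f a) := by
  classical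
  rw [Nat.card_eq_fintype_card, Nat.card_eq_fintype_card,
    Fintype.card_subtype, Fintype.card_subtype]
  rw [← Finset.sum_filter_add_sum_filter_not Finset.univ (fun a => Even (f a))]
  have he : ∀ a ∈ Finset.univ.filter (fun a => Even (f a)), (-1 : ℤ) ^ (f a) = 1 :=
    fun a ha => (Finset.mem_filter.mp ha).2.neg_one_pow
  have ho : ∀ a ∈ Finset.univ.filter (fun a => ¬Even (f a)), (-1 : ℤ) ^ (f a) = -1 :=
    fun a ha => (Nat.not_even_iff_odd.mp (Finset.mem_filter.mp ha).2).neg_one_pow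
  rw [Finset.sum_congr rfl he, Finset.sum_congr rfl ho]
  have hfo : Finset.univ.filter (fun a => Odd (f a)) =
      Finset.univ.filter (fun a => ¬Even (f a)) := by
    apply Finset.filter_congr
    intro a _
    exact Nat.not_even_iff_odd.symm
  rw [hfo]
  simp only [Finset.sum_const, smul_eq_mul, mul_one, mul_neg_one]
  ring

section Fpart

variable {π : Overpartition n}

lemma F_plain (h1 : ¬π.plain = 0) (h2 : ¬(mset π).Nonempty) :
    π.plain = {Nmin π} := by
  have hempty : mset π = ∅ := Finset.not_nonempty_iff_eq_empty.mp h2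
  have := Finset.union_eq_empty.mp hempty
  have he : π.plain.erase (Nmin π) = 0 := Multiset.toFinset_eq_empty.mp this.2
  have hc : Nmin π ::ₘ π.plain.erase (Nmin π) = π.plain :=
    Multiset.cons_erase (Nmin_mem h1)
  rw [he] at hc
  exact hc.symm

lemma F_over_lt (h1 : ¬π.plain = 0) (h2 : ¬(mset π).Nonempty) :
    ∀ x ∈ π.overl, x < Nmin π := by
  have hempty : mset π = ∅ := Finset.not_nonempty_iff_eq_empty.mp h2
  have hT : Tset π = ∅ := (Finset.union_eq_empty.mp hempty).1
  intro x hx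
  by_contra hc
  have : x ∈ Tset π := Finset.mem_filter.mpr ⟨hx, not_lt.mp hc⟩
  rw [hT] at this
  exact absurd this (Finset.notMem_empty _)

lemma F_not_mem (h1 : ¬π.plain = 0) (h2 : ¬(mset π).Nonempty) :
    Nmin π ∉ π.overl := fun hc => lt_irrefl _ (F_over_lt h1 h2 _ hc)

lemma F_lOgeN (h1 : ¬π.plain = 0) (h2 : ¬(mset π).Nonempty) : lOgeN π = 0 := by
  have hempty : mset π = ∅ := Finset.not_nonempty_iff_eq_empty.mp h2
  have hT : Tset π = ∅ := (Finset.union_eq_empty.mp hempty).1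
  rw [lOgeN_eq h1, hT, Finset.card_empty]

end Fpart

lemma DP_nonempty (hn : 1 ≤ n) (s : DP n) : s.1.Nonempty := by
  rw [Finset.nonempty_iff_ne_empty]
  intro h
  have := s.2.2
  rw [h] at this
  simp at this
  omega

noncomputable def toDP (π : Overpartition n) (h0 : π.plain = 0) : DP n :=
  ⟨π.overl, π.over_pos, by
    have hs := π.sum_eq
    rw [h0, Multiset.sum_zero] at hs
    simpa using hs⟩

noncomputable def ofDP (s : DP n) : Overpartition n :=
  ⟨s.1, 0, s.2.1, by simp, by simpa using s.2.2⟩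

lemma sum_A :
    ∑ π ∈ Finset.univ.filter (fun π : Overpartition n => π.plain = 0),
      (-1 : ℤ) ^ (lOgeN π) = ∑ s : DP n, (-1 : ℤ) ^ (s.1.card) := by
  refine Finset.sum_bij' (fun π hπ => toDP π ((Finset.mem_filter.mp hπ).2))
    (fun s _ => ofDP s) (fun a _ => Finset.mem_univ _)
    (fun s _ => Finset.mem_filter.mpr ⟨Finset.mem_univ _, rfl⟩)
    (fun π hπ => ?_) (fun s _ => ?_) (fun π hπ => ?_)
  · exact Overpartition.ext' rfl ((Finset.mem_filter.mp hπ).2).symm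
  · rfl
  · rw [lOgeN, if_pos ((Finset.mem_filter.mp hπ).2)]
    rfl

lemma Nmin_singleton {π : Overpartition n} {M : ℕ} (hp : π.plain = {M}) :
    Nmin π = M := by
  apply Nmin_eq_of
  · rw [hp]; exact Multiset.cons_ne_zero
  · rw [hp]; exact Multiset.mem_singleton.mpr rfl
  · intro y hy
    rw [hp, Multiset.mem_singleton] at hy
    omega

noncomputable def toDPF (π : Overpartition n) (h1 : ¬π.plain = 0)
    (h2 : ¬(mset π).Nonempty) : DP n :=
  ⟨insert (Nmin π) π.overl, by
    intro x hx
    rcases Finset.mem_insert.mp hx with rfl | hx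
    · exact Nmin_pos h1
    · exact π.over_pos x hx, by
    rw [Finset.sum_insert (F_not_mem h1 h2)]
    have hs := π.sum_eq
    rw [F_plain h1 h2, Multiset.sum_singleton] at hs
    omega⟩

noncomputable def ofDPF (hn : 1 ≤ n) (s : DP n) : Overpartition n where
  overl := s.1.erase (s.1.max' (DP_nonempty hn s))
  plain := {s.1.max' (DP_nonempty hn s)}
  over_pos := fun x hx => s.2.1 x (Finset.mem_of_mem_erase hx)
  plain_pos := by
    intro x hx
    rw [Multiset.mem_singleton] at hx
    subst hx
    exact s.2.1 _ (Finset.max'_mem _ _)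
  sum_eq := by
    have h : s.1.max' (DP_nonempty hn s) + ∑ x ∈ s.1.erase (s.1.max' (DP_nonempty hn s)), x
        = ∑ x ∈ s.1, x :=
      Finset.add_sum_erase s.1 (fun x => x) (Finset.max'_mem s.1 (DP_nonempty hn s))
    have h2 := s.2.2
    rw [Multiset.sum_singleton]
    omega

lemma ofDPF_plain (hn : 1 ≤ n) (s : DP n) :
    (ofDPF hn s).plain = {s.1.max' (DP_nonempty hn s)} := rfl

lemma ofDPF_mem (hn : 1 ≤ n) (s : DP n) :
    ¬(ofDPF hn s).plain = 0 ∧ ¬(mset (ofDPF hn s)).Nonempty := by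
  set M := s.1.max' (DP_nonempty hn s) with hM
  have hpl : (ofDPF hn s).plain = {M} := rfl
  have hNmin : Nmin (ofDPF hn s) = M := Nmin_singleton hpl
  constructor
  · rw [hpl]; exact Multiset.cons_ne_zero
  · rw [Finset.not_nonempty_iff_eq_empty, mset, Finset.union_eq_empty]
    constructor
    · rw [Tset, hNmin]
      apply Finset.filter_eq_empty_iff.mpr
      intro x hx
      have hx' : x ∈ (ofDPF hn s).overl := hx
      have hx1 : x ∈ s.1 := Finset.mem_of_mem_erase hx'
      have hx2 : x ≠ M := Finset.ne_of_mem_erase hx'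
      have hx3 : x ≤ M := Finset.le_max' _ _ hx1
      omega
    · rw [hNmin, hpl, Multiset.toFinset_eq_empty]
      show (M ::ₘ 0).erase M = 0
      exact Multiset.erase_cons_head M 0

lemma card_F (hn : 1 ≤ n) :
    (Finset.univ.filter
      (fun π : Overpartition n => ¬π.plain = 0 ∧ ¬(mset π).Nonempty)).card =
      Fintype.card (DP n) := by
  rw [← Finset.card_univ]
  refine Finset.card_bij'
    (fun π hπ => toDPF π (Finset.mem_filter.mp hπ).2.1 (Finset.mem_filter.mp hπ).2.2)
    (fun s _ => ofDPF hn s) (fun a _ => Finset.mem_univ _)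
    (fun s _ => Finset.mem_filter.mpr ⟨Finset.mem_univ _, ofDPF_mem hn s⟩)
    (fun π hπ => ?_) (fun s _ => ?_)
  · obtain ⟨-, h1, h2⟩ := Finset.mem_filter.mp hπ
    have hne : (toDPF π h1 h2).1.Nonempty := DP_nonempty hn _
    have hmax : (toDPF π h1 h2).1.max' hne = Nmin π := by
      apply le_antisymm
      · apply Finset.max'_le
        intro y hy
        rcases Finset.mem_insert.mp hy with rfl | hy
        · exact le_rfl
        · exact le_of_lt (F_over_lt h1 h2 _ hy)
      · exact Finset.le_max' _ _ (Finset.mem_insert_self _ _)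
    apply Overpartition.ext'
    · show ((toDPF π h1 h2).1).erase ((toDPF π h1 h2).1.max' _) = π.overl
      rw [hmax]
      exact Finset.erase_insert (F_not_mem h1 h2)
    · show ({(toDPF π h1 h2).1.max' _} : Multiset ℕ) = π.plain
      rw [hmax, F_plain h1 h2]
  · apply Subtype.ext
    show insert (Nmin (ofDPF hn s)) (ofDPF hn s).overl = s.1
    rw [Nmin_singleton (ofDPF_plain hn s)]
    exact Finset.insert_erase (Finset.max'_mem _ _)

lemma sum_F (hn : 1 ≤ n) :
    ∑ π ∈ Finset.univ.filter
        (fun π : Overpartition n => ¬π.plain = 0 ∧ ¬(mset π).Nonempty),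
      (-1 : ℤ) ^ (lOgeN π) = Fintype.card (DP n) := by
  have hterm : ∀ π ∈ Finset.univ.filter
      (fun π : Overpartition n => ¬π.plain = 0 ∧ ¬(mset π).Nonempty),
      (-1 : ℤ) ^ (lOgeN π) = 1 := by
    intro π hπ
    obtain ⟨_, h1, h2⟩ := Finset.mem_filter.mp hπ
    rw [F_lOgeN h1 h2, pow_zero]
  rw [Finset.sum_congr rfl hterm, Finset.sum_const, card_F hn]
  simp

lemma sum_I :
    ∑ π ∈ Finset.univ.filter
        (fun π : Overpartition n => ¬π.plain = 0 ∧ (mset π).Nonempty),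
      (-1 : ℤ) ^ (lOgeN π) = 0 := by
  apply Finset.sum_involution (g := fun π _ => iota π)
  · intro π hπ
    obtain ⟨_, h1, h2⟩ := Finset.mem_filter.mp hπ
    obtain ⟨_, _, _, hd⟩ := iota_key h1 h2
    rcases hd with hd | hd
    · rw [← hd, pow_succ]; ring
    · rw [hd, pow_succ]; ring
  · intro π hπ _
    obtain ⟨_, h1, h2⟩ := Finset.mem_filter.mp hπ
    exact iota_ne h1 h2
  · intro π hπ
    obtain ⟨_, h1, h2⟩ := Finset.mem_filter.mp hπ
    obtain ⟨ha, hb, _, _⟩ := iota_key h1 h2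
    exact Finset.mem_filter.mpr ⟨Finset.mem_univ _, ha, hb⟩
  · intro π hπ
    obtain ⟨_, h1, h2⟩ := Finset.mem_filter.mp hπ
    exact (iota_key h1 h2).2.2.1

lemma final_count :
    (∑ s : DP n, (-1 : ℤ) ^ (s.1.card)) + (Fintype.card (DP n) : ℤ) =
      2 * Fintype.card {s : DP n // Even s.1.card} := by
  classical
  rw [← Finset.sum_filter_add_sum_filter_not Finset.univ
    (fun s : DP n => Even s.1.card) (fun s => (-1 : ℤ) ^ (s.1.card))]
  have he : ∀ s ∈ Finset.univ.filter (fun s : DP n => Even s.1.card),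
      (-1 : ℤ) ^ (s.1.card) = 1 := fun s hs => (Finset.mem_filter.mp hs).2.neg_one_pow
  have ho : ∀ s ∈ Finset.univ.filter (fun s : DP n => ¬Even s.1.card),
      (-1 : ℤ) ^ (s.1.card) = -1 := fun s hs =>
    (Nat.not_even_iff_odd.mp (Finset.mem_filter.mp hs).2).neg_one_pow
  rw [Finset.sum_congr rfl he, Finset.sum_congr rfl ho]
  have hcard := Finset.card_filter_add_card_filter_not
    (s := (Finset.univ : Finset (DP n))) (p := fun s : DP n => Even s.1.card)
  rw [Fintype.card_subtype]
  have hcu : Fintype.card (DP n) = (Finset.univ : Finset (DP n)).card :=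
    Finset.card_univ.symm
  rw [hcu, ← hcard]
  simp only [Finset.sum_const, smul_eq_mul, mul_one, mul_neg_one]
  push_cast
  ring

lemma rhs_card :
    (Nat.card {p : n.Partition //
        p.parts.Nodup ∧ Even (Multiset.card p.parts)} : ℤ) =
      (Fintype.card {s : DP n // Even s.1.card} : ℤ) := by
  have e : {p : n.Partition // p.parts.Nodup ∧ Even (Multiset.card p.parts)} ≃
      {s : DP n // Even s.1.card} :=
    { toFun := fun p => ⟨⟨⟨p.1.parts, p.2.1⟩, fun x hx => p.1.parts_pos hx, by
        have h := p.1.parts_sum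
        rw [Finset.sum_eq_multiset_sum]
        simpa using h⟩, p.2.2⟩
      invFun := fun s => ⟨⟨s.1.1.val, fun {i} hi => s.1.2.1 i hi, by
        have h := s.1.2.2
        rw [Finset.sum_eq_multiset_sum] at h
        simpa using h⟩, s.1.1.nodup, s.2⟩
      left_inv := fun p => rfl
      right_inv := fun s => rfl }
  rw [Nat.card_congr e, Nat.card_eq_fintype_card]

end Stmt8

open Stmt8 in
theorem stmt_8 (n : ℕ) (hn : 1 ≤ n) :
    (Nat.card {π : Overpartition n // Even (lOgeN π)} : ℤ) -
      Nat.card {π : Overpartition n // Odd (lOgeN π)} =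
    2 * Nat.card {p : n.Partition //
        p.parts.Nodup ∧ Even (Multiset.card p.parts)} := by
  classical
  rw [signed_count lOgeN, rhs_card]
  rw [← Finset.sum_filter_add_sum_filter_not Finset.univ
    (fun π : Overpartition n => π.plain = 0) (fun π => (-1 : ℤ) ^ (lOgeN π))]
  rw [← Finset.sum_filter_add_sum_filter_not
    (Finset.univ.filter (fun π : Overpartition n => ¬π.plain = 0))
    (fun π : Overpartition n => (mset π).Nonempty) (fun π => (-1 : ℤ) ^ (lOgeN π))]
  rw [Finset.filter_filter, Finset.filter_filter]
  rw [sum_A, sum_I, sum_F hn, ← final_count]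
  ring
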